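/- arXiv:1410.6637 — 4 statements merged into one kernel-verified Lean document; each statement's English description precedes it below -/
import Mathlib

section
/- For time-dependent matrices m1, m2 (matrix-valued functions of two time variables on an interval I), the ★-product defined by (m2 ★ m1)(t',t) = ∫_t^{t'} m2(t',τ) m1(τ,t) dτ is associative: (m3 ★ m2) ★ m1 = m3 ★ (m2 ★ m1). -/
open MeasureTheory intervalIntegral

attribute [local instance] Matrix.linftyOpNormedRing Matrix.linftyOpNormedAlgebra

/-- The ★-product of time-dependent matrices:
`(m2 ★ m1)(t',t) = ∫_t^{t'} m2(t',τ) * m1(τ,t) dτ`. -/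
noncomputable def starProd {n : ℕ} (m2 m1 : ℝ → ℝ → Matrix (Fin n) (Fin n) ℂ) :
    ℝ → ℝ → Matrix (Fin n) (Fin n) ℂ :=
  fun t' t => ∫ τ in t..t', m2 t' τ * m1 τ t

section TriangleFubini
open Set

lemma triangle_fubini {E : Type*} [NormedAddCommGroup E] [NormedSpace ℝ E] [CompleteSpace E]
    (f : ℝ → ℝ → E) (hf : Continuous fun p : ℝ × ℝ => f p.1 p.2) {a b : ℝ} (hab : a ≤ b) :
    ∫ x in a..b, ∫ y in a..x, f x y = ∫ y in a..b, ∫ x in y..b, f x y := by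
  set T : Set (ℝ × ℝ) := {p | a ≤ p.2 ∧ p.2 < p.1 ∧ p.1 ≤ b} with hT
  have hTm : MeasurableSet T := by
    apply MeasurableSet.inter (measurableSet_le measurable_const measurable_snd)
    exact (measurableSet_lt measurable_snd measurable_fst).inter
      (measurableSet_le measurable_fst measurable_const)
  set g : ℝ × ℝ → E := T.indicator (fun p => f p.1 p.2) with hg
  have hTsub : T ⊆ Icc a b ×ˢ Icc a b := by
    rintro ⟨x, y⟩ ⟨h1, h2, h3⟩
    exact ⟨⟨le_trans h1 h2.le, h3⟩, h1, le_trans h2.le h3⟩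
  have hgint : Integrable g (volume.prod volume) := by
    rw [hg, integrable_indicator_iff hTm]
    exact ((hf.continuousOn.integrableOn_compact (isCompact_Icc.prod isCompact_Icc)).mono_set hTsub)
  have hswap : ∫ x, ∫ y, g (x, y) = ∫ y, ∫ x, g (x, y) :=
    integral_integral_swap (f := fun x y => g (x, y)) hgint
  have hL : (fun x => ∫ y, g (x, y)) = (Ioc a b).indicator (fun x => ∫ y in a..x, f x y) := by
    funext x
    by_cases hx : x ∈ Ioc a b
    · rw [indicator_of_mem hx]
      have h1 : (fun y => g (x, y)) = (Ico a x).indicator (f x) := by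
        funext y
        simp only [hg, indicator, mem_Ico, hT, mem_setOf_eq]
        by_cases hy : a ≤ y ∧ y < x
        · simp [hy.1, hy.2, hx.2]
        · have : ¬(a ≤ y ∧ y < x ∧ x ≤ b) := fun h => hy ⟨h.1, h.2.1⟩
          simp [this, hy]
      rw [h1, MeasureTheory.integral_indicator measurableSet_Ico, integral_Ico_eq_integral_Ioo,
        ← integral_Ioc_eq_integral_Ioo, intervalIntegral.integral_of_le hx.1.le]
    · rw [indicator_of_notMem hx]
      have h1 : (fun y => g (x, y)) = fun _ => 0 := by
        funext y
        simp only [hg, indicator, hT, mem_setOf_eq]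
        have : ¬(a ≤ y ∧ y < x ∧ x ≤ b) := by
          rintro ⟨hy1, hy2, hy3⟩
          exact hx ⟨lt_of_le_of_lt hy1 hy2, hy3⟩
        simp [this]
      simp [h1]
  have hR : (fun y => ∫ x, g (x, y)) = (Ico a b).indicator (fun y => ∫ x in y..b, f x y) := by
    funext y
    by_cases hy : y ∈ Ico a b
    · rw [indicator_of_mem hy]
      have h1 : (fun x => g (x, y)) = (Ioc y b).indicator (fun x => f x y) := by
        funext x
        simp only [hg, indicator, mem_Ioc, hT, mem_setOf_eq]
        by_cases hx : y < x ∧ x ≤ b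
        · simp [hx.1, hx.2, hy.1]
        · have : ¬(a ≤ y ∧ y < x ∧ x ≤ b) := fun h => hx ⟨h.2.1, h.2.2⟩
          simp [this, hx]
      rw [h1, MeasureTheory.integral_indicator measurableSet_Ioc, intervalIntegral.integral_of_le hy.2.le]
    · rw [indicator_of_notMem hy]
      have h1 : (fun x => g (x, y)) = fun _ => 0 := by
        funext x
        simp only [hg, indicator, hT, mem_setOf_eq]
        have : ¬(a ≤ y ∧ y < x ∧ x ≤ b) := by
          rintro ⟨hy1, hy2, hy3⟩
          exact hy ⟨hy1, lt_of_lt_of_le hy2 hy3⟩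
        simp [this]
      simp [h1]
  rw [hL, hR] at hswap
  rw [MeasureTheory.integral_indicator measurableSet_Ioc, MeasureTheory.integral_indicator measurableSet_Ico] at hswap
  rw [intervalIntegral.integral_of_le hab, intervalIntegral.integral_of_le hab, hswap,
    integral_Ico_eq_integral_Ioo, ← integral_Ioc_eq_integral_Ioo]

lemma triangle_fubini' {E : Type*} [NormedAddCommGroup E] [NormedSpace ℝ E] [CompleteSpace E]
    (f : ℝ → ℝ → E) (hf : Continuous fun p : ℝ × ℝ => f p.1 p.2) (t t' : ℝ) :
    ∫ x in t..t', ∫ y in t..x, f x y = ∫ y in t..t', ∫ x in y..t', f x y := by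
  rcases le_total t t' with h | h
  · exact triangle_fubini f hf h
  · have key := triangle_fubini (fun x y => f y x) (hf.comp continuous_swap) h
    calc ∫ x in t..t', ∫ y in t..x, f x y
        = -∫ x in t'..t, ∫ y in t..x, f x y := intervalIntegral.integral_symm t' t
      _ = -∫ x in t'..t, -∫ y in x..t, f x y := by
          congr 1; apply intervalIntegral.integral_congr
          intro x _; exact intervalIntegral.integral_symm x t
      _ = ∫ x in t'..t, ∫ y in x..t, f x y := by rw [intervalIntegral.integral_neg, neg_neg]
      _ = ∫ y in t'..t, ∫ x in t'..y, f x y := key.symm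
      _ = ∫ y in t'..t, -∫ x in y..t', f x y := by
          apply intervalIntegral.integral_congr
          intro y _; exact intervalIntegral.integral_symm y t'
      _ = -∫ y in t'..t, ∫ x in y..t', f x y := intervalIntegral.integral_neg
      _ = ∫ y in t..t', ∫ x in y..t', f x y := (intervalIntegral.integral_symm t' t).symm

end TriangleFubini

set_option maxHeartbeats 2000000 in
/-- the ★-product is associative for continuous time-dependent matrices. -/
theorem starProd_assoc {n : ℕ} (I : Set ℝ) (hI : I.OrdConnected)
    (m1 m2 m3 : ℝ → ℝ → Matrix (Fin n) (Fin n) ℂ)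
    (h1 : Continuous fun p : ℝ × ℝ => m1 p.1 p.2)
    (h2 : Continuous fun p : ℝ × ℝ => m2 p.1 p.2)
    (h3 : Continuous fun p : ℝ × ℝ => m3 p.1 p.2) :
    ∀ t ∈ I, ∀ t' ∈ I,
      starProd (starProd m3 m2) m1 t' t = starProd m3 (starProd m2 m1) t' t := by
  intro t _ t' _
  show (∫ σ in t..t', (∫ τ in σ..t', m3 t' τ * m2 τ σ) * m1 σ t)
      = ∫ τ in t..t', m3 t' τ * ∫ σ in t..τ, m2 τ σ * m1 σ t
  have step1 : ∀ σ, (∫ τ in σ..t', m3 t' τ * m2 τ σ) * m1 σ t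
      = ∫ τ in σ..t', m3 t' τ * m2 τ σ * m1 σ t := by
    intro σ
    have hint :=
      ((((h3.comp (continuous_const.prodMk continuous_id)).mul
        (h2.comp (continuous_id.prodMk continuous_const))) : Continuous fun τ => m3 t' τ * m2 τ σ)).intervalIntegrable (μ := volume) σ t'
    exact (((ContinuousLinearMap.mul ℂ (Matrix (Fin n) (Fin n) ℂ)).flip (m1 σ t)).intervalIntegral_comp_comm hint).symm
  have step2 : ∀ τ, m3 t' τ * (∫ σ in t..τ, m2 τ σ * m1 σ t)
      = ∫ σ in t..τ, m3 t' τ * (m2 τ σ * m1 σ t) := by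
    intro τ
    have hint :=
      (((h2.comp (continuous_const.prodMk continuous_id)).mul
        (h1.comp (continuous_id.prodMk continuous_const)) : Continuous fun σ => m2 τ σ * m1 σ t)).intervalIntegrable (μ := volume) t τ
    exact ((ContinuousLinearMap.mul ℂ (Matrix (Fin n) (Fin n) ℂ) (m3 t' τ)).intervalIntegral_comp_comm hint).symm
  have hcont : Continuous fun p : ℝ × ℝ => m3 t' p.1 * (m2 p.1 p.2 * m1 p.2 t) :=
    (h3.comp (continuous_const.prodMk continuous_fst)).mul
      (h2.mul (h1.comp (continuous_snd.prodMk continuous_const)))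
  calc (∫ σ in t..t', (∫ τ in σ..t', m3 t' τ * m2 τ σ) * m1 σ t)
      = ∫ σ in t..t', ∫ τ in σ..t', m3 t' τ * (m2 τ σ * m1 σ t) := by
        refine intervalIntegral.integral_congr fun σ _ => ?_
        rw [step1 σ]; simp_rw [mul_assoc]
    _ = ∫ τ in t..t', ∫ σ in t..τ, m3 t' τ * (m2 τ σ * m1 σ t) :=
        (triangle_fubini' (fun x y => m3 t' x * (m2 x y * m1 y t)) hcont t t').symm
    _ = ∫ τ in t..t', m3 t' τ * ∫ σ in t..τ, m2 τ σ * m1 σ t :=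
        intervalIntegral.integral_congr fun τ _ => (step2 τ).symm
end

section
/- Let m be a continuous bounded time-dependent matrix on a finite interval and let h(t',t) = ∑_{k≥1} m^{★k}(t',t). Then h solves the Volterra equation of the second kind h(t',t) = m(t',t) + ∫_t^{t'} m(t',τ) h(τ,t) dτ. -/
open MeasureTheory intervalIntegral

attribute [local instance] Matrix.linftyOpNormedRing Matrix.linftyOpNormedAlgebra

noncomputable def starPow {n : ℕ} (m : ℝ → ℝ → Matrix (Fin n) (Fin n) ℂ) :
    ℕ → ℝ → ℝ → Matrix (Fin n) (Fin n) ℂ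
  | 0 => fun t' t => if t' = t then 1 else 0
  | 1 => m
  | (k + 2) => starProd m (starPow m (k + 1))

lemma starPow_succ_succ {n : ℕ} (m : ℝ → ℝ → Matrix (Fin n) (Fin n) ℂ) (k : ℕ) :
    starPow m (k + 2) = starProd m (starPow m (k + 1)) := rfl

lemma starPow_succ_continuous {n : ℕ} (m : ℝ → ℝ → Matrix (Fin n) (Fin n) ℂ)
    (hm : Continuous fun p : ℝ × ℝ => m p.1 p.2) (k : ℕ) :
    Continuous fun p : ℝ × ℝ => starPow m (k + 1) p.1 p.2 := by
  induction k with
  | zero => exact hm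
  | succ k ih =>
    have hF : Continuous
        (Function.uncurry fun (p : ℝ × ℝ) (τ : ℝ) => m p.1 τ * starPow m (k + 1) τ p.2) := by
      show Continuous fun q : (ℝ × ℝ) × ℝ => m q.1.1 q.2 * starPow m (k + 1) q.2 q.1.2
      exact (hm.comp (continuous_fst.fst.prodMk continuous_snd)).mul
        (ih.comp (continuous_snd.prodMk continuous_fst.snd))
    have h1 : Continuous fun p : ℝ × ℝ =>
        ∫ τ in (0:ℝ)..p.1, m p.1 τ * starPow m (k + 1) τ p.2 :=
      continuous_parametric_intervalIntegral_of_continuous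
        (f := fun (p : ℝ × ℝ) (τ : ℝ) => m p.1 τ * starPow m (k + 1) τ p.2) hF continuous_fst
    have h2 : Continuous fun p : ℝ × ℝ =>
        ∫ τ in (0:ℝ)..p.2, m p.1 τ * starPow m (k + 1) τ p.2 :=
      continuous_parametric_intervalIntegral_of_continuous
        (f := fun (p : ℝ × ℝ) (τ : ℝ) => m p.1 τ * starPow m (k + 1) τ p.2) hF continuous_snd
    have : (fun p : ℝ × ℝ => starPow m (k + 2) p.1 p.2) = fun p : ℝ × ℝ =>
        (∫ τ in (0:ℝ)..p.1, m p.1 τ * starPow m (k + 1) τ p.2)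
          - ∫ τ in (0:ℝ)..p.2, m p.1 τ * starPow m (k + 1) τ p.2 := by
      funext p
      have hcont : Continuous fun τ => m p.1 τ * starPow m (k + 1) τ p.2 :=
        hF.comp ((continuous_const (y := p)).prodMk continuous_id)
      rw [starPow_succ_succ]
      exact (integral_interval_sub_left (hcont.intervalIntegrable _ _)
        (hcont.intervalIntegrable _ _)).symm
    rw [this]
    exact h1.sub h2

lemma starPow_succ_bound {n : ℕ} (a₀ a₁ b : ℝ) (m : ℝ → ℝ → Matrix (Fin n) (Fin n) ℂ)
    (hm : Continuous fun p : ℝ × ℝ => m p.1 p.2)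
    (hb : ∀ t₁ ∈ Set.Icc a₀ a₁, ∀ t₂ ∈ Set.Icc a₀ a₁, ‖m t₂ t₁‖ ≤ b)
    (hb0 : 0 ≤ b) (k : ℕ) :
    ∀ t ∈ Set.Icc a₀ a₁, ∀ t' ∈ Set.Icc a₀ a₁,
      ‖starPow m (k + 1) t' t‖ ≤ b ^ (k + 1) * |t' - t| ^ k / k.factorial := by
  induction k with
  | zero =>
    intro t ht t' ht'
    show ‖m t' t‖ ≤ b ^ (0 + 1) * |t' - t| ^ 0 / ((Nat.factorial 0 : ℕ) : ℝ)
    simpa using hb t ht t' ht'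
  | succ k ih =>
    intro t ht t' ht'
    have hsub : Set.uIoc t t' ⊆ Set.Icc a₀ a₁ := fun τ hτ => by
      rcases hτ with ⟨h1, h2⟩
      constructor
      · calc a₀ ≤ min t t' := le_min ht.1 ht'.1
          _ ≤ τ := le_of_lt h1
      · calc τ ≤ max t t' := h2
          _ ≤ a₁ := max_le ht.2 ht'.2
    have key : ∀ τ ∈ Set.uIoc t t',
        ‖m t' τ * starPow m (k + 1) τ t‖ ≤ b ^ (k + 2) / k.factorial * |τ - t| ^ k := by
      intro τ hτ
      have hτI := hsub hτ
      calc ‖m t' τ * starPow m (k + 1) τ t‖ ≤ ‖m t' τ‖ * ‖starPow m (k + 1) τ t‖ :=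
            norm_mul_le _ _
        _ ≤ b * (b ^ (k + 1) * |τ - t| ^ k / k.factorial) := by
            apply mul_le_mul (hb τ hτI t' ht') (ih t ht τ hτI) (norm_nonneg _) hb0
        _ = b ^ (k + 2) / k.factorial * |τ - t| ^ k := by ring
    have hcont : Continuous fun τ => ‖m t' τ * starPow m (k + 1) τ t‖ := by
      apply Continuous.norm
      exact (hm.comp (continuous_const.prodMk continuous_id)).mul
        ((starPow_succ_continuous m hm k).comp (continuous_id.prodMk continuous_const))
    calc ‖starPow m (k + 2) t' t‖
        = ‖∫ τ in t..t', m t' τ * starPow m (k + 1) τ t‖ := by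
          rw [starPow_succ_succ]; rfl
      _ ≤ ∫ τ in Set.uIoc t t', ‖m t' τ * starPow m (k + 1) τ t‖ :=
          intervalIntegral.norm_integral_le_integral_norm_uIoc
      _ ≤ ∫ τ in Set.uIoc t t', b ^ (k + 2) / k.factorial * |τ - t| ^ k := by
          apply setIntegral_mono_on
          · exact hcont.integrableOn_uIoc
          · exact (continuous_const.mul
              ((continuous_abs.comp (continuous_id.sub continuous_const)).pow k)).integrableOn_uIoc
          · exact measurableSet_uIoc
          · exact key
      _ = b ^ (k + 2) / k.factorial * ∫ τ in Set.uIoc t t', |τ - t| ^ k := by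
          rw [MeasureTheory.integral_const_mul]
      _ = b ^ (k + 2) / k.factorial * (|t' - t| ^ (k + 1) / (k + 1)) := by
          rw [integral_pow_abs_sub_uIoc]
      _ = b ^ (k + 2) * |t' - t| ^ (k + 1) / (k + 1).factorial := by
          rw [Nat.factorial_succ, div_mul_div_comm]
          push_cast
          ring

/-- `h(t',t) = ∑_{k≥1} m^{★k}(t',t)` solves the Volterra equation of the
second kind `h(t',t) = m(t',t) + ∫_t^{t'} m(t',τ) h(τ,t) dτ`. -/
theorem neumann_series_solves_volterra {n : ℕ} (a₀ a₁ b : ℝ)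
    (m : ℝ → ℝ → Matrix (Fin n) (Fin n) ℂ)
    (hm : Continuous fun p : ℝ × ℝ => m p.1 p.2)
    (hb : ∀ t₁ ∈ Set.Icc a₀ a₁, ∀ t₂ ∈ Set.Icc a₀ a₁, ‖m t₂ t₁‖ ≤ b)
    (h : ℝ → ℝ → Matrix (Fin n) (Fin n) ℂ)
    (hdef : ∀ t' t, h t' t = ∑' k : ℕ, starPow m (k + 1) t' t) :
    ∀ t ∈ Set.Icc a₀ a₁, ∀ t' ∈ Set.Icc a₀ a₁,
      h t' t = m t' t + ∫ τ in t..t', m t' τ * h τ t := by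
  intro t ht t' ht'
  have hb0 : 0 ≤ b := le_trans (norm_nonneg _) (hb t ht t ht)
  have hbound := starPow_succ_bound a₀ a₁ b m hm hb hb0
  -- summability of the series at points of the square
  have hsum : ∀ x ∈ Set.Icc a₀ a₁, ∀ y ∈ Set.Icc a₀ a₁,
      Summable fun k : ℕ => starPow m (k + 1) x y := by
    intro x hx y hy
    apply Summable.of_norm_bounded (g := fun k : ℕ => b ^ (k + 1) * |x - y| ^ k / k.factorial)
    · have := (Real.summable_pow_div_factorial (b * |x - y|)).mul_left b
      apply this.congr
      intro k
      rw [mul_pow]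
      ring
    · intro k
      exact hbound k y hy x hx
  -- subset facts
  have hIccsub : Set.uIcc t t' ⊆ Set.Icc a₀ a₁ :=
    Set.uIcc_subset_Icc ht ht'
  set c := a₁ - a₀ with hc
  have habs : ∀ x ∈ Set.Icc a₀ a₁, ∀ y ∈ Set.Icc a₀ a₁, |x - y| ≤ c := by
    intro x hx y hy
    rw [abs_sub_le_iff]
    constructor <;> [linarith [hx.2, hy.1]; linarith [hy.2, hx.1]]
  have hc0 : 0 ≤ c := by
    have := habs t ht t ht; simpa using this.trans' (abs_nonneg _)
  -- the uniform bound sequence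
  set C : ℕ → ℝ := fun k => b ^ (k + 2) * c ^ k / k.factorial with hC
  have hCsum : Summable C := by
    have := (Real.summable_pow_div_factorial (b * c)).mul_left (b ^ 2)
    apply this.congr
    intro k
    rw [hC, mul_pow]
    ring
  have hC0 : ∀ k, 0 ≤ C k := by
    intro k
    apply div_nonneg _ (Nat.cast_nonneg _)
    positivity
  have hFbound : ∀ k, ∀ τ ∈ Set.uIcc t t',
      ‖m t' τ * starPow m (k + 1) τ t‖ ≤ C k := by
    intro k τ hτ
    have hτI := hIccsub hτ
    calc ‖m t' τ * starPow m (k + 1) τ t‖ ≤ ‖m t' τ‖ * ‖starPow m (k + 1) τ t‖ :=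
          norm_mul_le _ _
      _ ≤ b * (b ^ (k + 1) * |τ - t| ^ k / k.factorial) :=
          mul_le_mul (hb τ hτI t' ht') (hbound k t ht τ hτI) (norm_nonneg _) hb0
      _ ≤ b * (b ^ (k + 1) * c ^ k / k.factorial) := by
          gcongr
          exact habs τ hτI t ht
      _ = C k := by rw [hC]; ring
  have hFcont : ∀ k, Continuous fun τ => m t' τ * starPow m (k + 1) τ t := by
    intro k
    exact (hm.comp (continuous_const.prodMk continuous_id)).mul
      ((starPow_succ_continuous m hm k).comp (continuous_id.prodMk continuous_const))
  -- swapping sum and integral on an Ioc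
  have hswapIoc : ∀ u v : ℝ, u ≤ v → Set.Ioc u v ⊆ Set.uIcc t t' →
      ∑' k : ℕ, ∫ τ in Set.Ioc u v, m t' τ * starPow m (k + 1) τ t
        = ∫ τ in Set.Ioc u v, ∑' k : ℕ, m t' τ * starPow m (k + 1) τ t := by
    intro u v huv hsub
    apply integral_tsum_of_summable_integral_norm
    · intro k
      exact (hFcont k).integrableOn_Ioc
    · apply Summable.of_nonneg_of_le
        (fun k => integral_nonneg fun τ => norm_nonneg _)
        (fun k => ?_) (hCsum.mul_right (v - u))
      calc (∫ τ in Set.Ioc u v, ‖m t' τ * starPow m (k + 1) τ t‖)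
          ≤ ∫ _τ in Set.Ioc u v, C k := by
            apply setIntegral_mono_on
            · exact (hFcont k).norm.integrableOn_Ioc
            · exact integrableOn_const measure_Ioc_lt_top.ne
            · exact measurableSet_Ioc
            · exact fun τ hτ => hFbound k τ (hsub hτ)
        _ = C k * (v - u) := by
            rw [setIntegral_const, Real.volume_real_Ioc, max_eq_left (by linarith : (0:ℝ) ≤ v - u),
              smul_eq_mul, mul_comm]
  -- swapping sum and interval integral
  have hswap : ∑' k : ℕ, ∫ τ in t..t', m t' τ * starPow m (k + 1) τ t
      = ∫ τ in t..t', ∑' k : ℕ, m t' τ * starPow m (k + 1) τ t := by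
    rcases le_total t t' with hle | hle
    · simp_rw [intervalIntegral.integral_of_le hle]
      exact hswapIoc t t' hle (Set.Ioc_subset_Icc_self.trans Set.Icc_subset_uIcc)
    · simp_rw [intervalIntegral.integral_symm t' t, intervalIntegral.integral_of_le hle]
      rw [tsum_neg, hswapIoc t' t hle (Set.Ioc_subset_Icc_self.trans Set.Icc_subset_uIcc')]
  -- now the computation
  have h0 : h t' t = m t' t + ∑' k : ℕ, starPow m (k + 2) t' t := by
    rw [hdef, (hsum t' ht' t ht).tsum_eq_zero_add]
    rfl
  rw [h0]
  congr 1
  calc ∑' k : ℕ, starPow m (k + 2) t' t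
      = ∑' k : ℕ, ∫ τ in t..t', m t' τ * starPow m (k + 1) τ t := rfl
    _ = ∫ τ in t..t', ∑' k : ℕ, m t' τ * starPow m (k + 1) τ t := hswap
    _ = ∫ τ in t..t', m t' τ * h τ t := by
        apply intervalIntegral.integral_congr
        intro τ hτ
        have hτI := hIccsub hτ
        show (∑' k : ℕ, m t' τ * starPow m (k + 1) τ t) = m t' τ * h τ t
        rw [hdef τ t, Summable.tsum_mul_left _ (hsum τ hτI t ht)]
end

section
/- Entrywise decay bound for time-ordered exponentials of sparse matrices: if H_{βα}(t) = 0 for all t whenever (α,β) is not an edge of a graph G, h = sup_t max_{α,β} |H_{αβ}(t)|, and W_k(α,ω) denotes the number of walks of length k from α to ω in G, then for t ≤ t', |U(t',t)_{ωα}| ≤ ∑_{k ≥ d(α,ω)} h^k (t'-t)^k / k! · W_k(α,ω), where d(α,ω) is the graph distance from α to ω (and U(t',t)_{ωα} = δ_{ωα} contribution handled by the k=0 term when α=ω). -/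
open MeasureTheory

attribute [local instance] Matrix.linftyOpNormedRing Matrix.linftyOpNormedAlgebra

section TOEaux
variable {V : Type*} [Fintype V] [DecidableEq V]

lemma TOE_entry_norm_le (M : Matrix V V ℂ) (i j : V) : ‖M i j‖ ≤ ‖M‖ := by
  rw [← coe_nnnorm, ← coe_nnnorm, NNReal.coe_le_coe, Matrix.linfty_opNNNorm_def]
  exact le_trans (Finset.single_le_sum (f := fun j => ‖M i j‖₊) (fun _ _ => zero_le)
    (Finset.mem_univ j)) (Finset.le_sup (f := fun i => ∑ j, ‖M i j‖₊) (Finset.mem_univ i))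

noncomputable def TOE_entryCLM (i j : V) : Matrix V V ℂ →L[ℝ] ℂ :=
  LinearMap.mkContinuous
    { toFun := fun M => M i j
      map_add' := fun _ _ => rfl
      map_smul' := fun _ _ => rfl } 1
    (fun M => by rw [one_mul]; exact TOE_entry_norm_le M i j)

lemma TOE_entryCLM_apply (i j : V) (M : Matrix V V ℂ) : TOE_entryCLM i j M = M i j := rfl

end TOEaux

/-- entrywise decay bound for the time-ordered exponential of a sparse
matrix: `|U(t',t)_{ωα}| ≤ ∑_{k ≥ d(α,ω)} h^k (t'-t)^k / k! · W_k(α,ω)`, where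
`W_k(α,ω) = (A^k)_{ωα}` counts the walks of length `k` from `α` to `ω` on the sparsity
graph of `H` and `d(α,ω)` is the graph distance. -/
theorem timeOrderedExp_entry_walk_bound {V : Type*} [Fintype V] [DecidableEq V]
    (a₀ a₁ h : ℝ)
    (H : ℝ → Matrix V V ℂ) (hH : ContinuousOn H (Set.Icc a₀ a₁))
    (A : Matrix V V ℕ)
    (hA0 : ∀ β α, (∀ s ∈ Set.Icc a₀ a₁, H s β α = 0) → A β α = 0)
    (hA1 : ∀ β α, (∃ s ∈ Set.Icc a₀ a₁, H s β α ≠ 0) → A β α = 1)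
    (hb : ∀ s ∈ Set.Icc a₀ a₁, ∀ β α, ‖H s β α‖ ≤ h)
    (t t' : ℝ) (ht : t ∈ Set.Icc a₀ a₁) (ht' : t' ∈ Set.Icc a₀ a₁) (htt : t ≤ t')
    (U : ℝ → Matrix V V ℂ) (hU0 : U t = 1)
    (hU : ∀ s ∈ Set.Icc a₀ a₁, HasDerivAt U (H s * U s) s)
    (α ω : V) :
    ‖U t' ω α‖
      ≤ ∑' k : {k : ℕ // sInf {j : ℕ | (A ^ j) ω α ≠ 0} ≤ k},
          h ^ (k : ℕ) * (t' - t) ^ (k : ℕ) / (Nat.factorial k : ℝ)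
            * ((A ^ (k : ℕ)) ω α : ℝ) := by
  classical
  have htsub : Set.Icc t t' ⊆ Set.Icc a₀ a₁ := Set.Icc_subset_Icc ht.1 ht'.2
  have hh0 : 0 ≤ h := le_trans (norm_nonneg _) (hb t ht α α)
  set c : ℝ := (Fintype.card V : ℝ) with hcdef
  have hc0 : 0 ≤ c := Nat.cast_nonneg _
  -- entrywise bound on H via A
  have hHle : ∀ s ∈ Set.Icc a₀ a₁, ∀ β γ, ‖H s β γ‖ ≤ h * (A β γ : ℝ) := by
    intro s hs β γ
    by_cases hc : ∃ r ∈ Set.Icc a₀ a₁, H r β γ ≠ 0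
    · rw [hA1 β γ hc]; simpa using hb s hs β γ
    · push_neg at hc
      rw [hc s hs]
      simpa using mul_nonneg hh0 (Nat.cast_nonneg (A β γ))
  have hA_le : ∀ β γ, (A β γ : ℝ) ≤ 1 := by
    intro β γ
    by_cases hc : ∃ r ∈ Set.Icc a₀ a₁, H r β γ ≠ 0
    · rw [hA1 β γ hc]; norm_num
    · push_neg at hc
      rw [hA0 β γ hc]; norm_num
  have hAk : ∀ (k : ℕ) (β γ : V), ((A ^ k) β γ : ℝ) ≤ c ^ k := by
    intro k
    induction k with
    | zero =>
      intro β γ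
      by_cases hβγ : β = γ <;> simp [Matrix.one_apply, hβγ]
    | succ k ihk =>
      intro β γ
      rw [pow_succ' A, Matrix.mul_apply]
      push_cast
      calc (∑ δ, (A β δ : ℝ) * ((A ^ k) δ γ : ℝ))
          ≤ ∑ δ : V, 1 * c ^ k := by
            refine Finset.sum_le_sum fun δ _ => ?_
            exact mul_le_mul (hA_le β δ) (ihk δ γ) (Nat.cast_nonneg _)
              (by norm_num)
        _ = c ^ (k + 1) := by
            simp [Finset.sum_const, hcdef]
            ring
  -- continuity of U
  have hUc : ContinuousOn U (Set.Icc a₀ a₁) := fun s hs =>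
    (hU s hs).continuousAt.continuousWithinAt
  -- continuity of the entry of H * U
  have hHUc : ContinuousOn (fun r => H r * U r) (Set.Icc a₀ a₁) := hH.mul hUc
  have hentc : ∀ β γ, ContinuousOn (fun r => (H r * U r) β γ) (Set.Icc a₀ a₁) := by
    intro β γ
    exact (TOE_entryCLM β γ).continuous.comp_continuousOn hHUc
  -- bound on U
  obtain ⟨M, hMn⟩ := (isCompact_Icc (a := t) (b := t')).exists_bound_of_continuousOn
    (hUc.mono htsub)
  have hM : ∀ s ∈ Set.Icc t t', ∀ β γ, ‖U s β γ‖ ≤ M := fun s hs β γ =>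
    le_trans (TOE_entry_norm_le (U s) β γ) (hMn s hs)
  have hM0 : 0 ≤ M := le_trans (norm_nonneg _) (hM t ⟨le_rfl, htt⟩ α α)
  -- the integral equation, entrywise
  have hUeq : ∀ s ∈ Set.Icc t t', ∀ β γ,
      U s β γ = (1 : Matrix V V ℂ) β γ + ∫ r in t..s, (H r * U r) β γ := by
    intro s hs β γ
    have hsub : Set.uIcc t s ⊆ Set.Icc a₀ a₁ := by
      rw [Set.uIcc_of_le hs.1]
      exact (Set.Icc_subset_Icc le_rfl hs.2).trans htsub
    have hderiv : ∀ r ∈ Set.uIcc t s, HasDerivAt (fun u => U u β γ) ((H r * U r) β γ) r := by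
      intro r hr
      have := (TOE_entryCLM β γ).hasFDerivAt.comp_hasDerivAt r (hU r (hsub hr))
      exact this
    have hint : IntervalIntegrable (fun r => (H r * U r) β γ) volume t s :=
      ((hentc β γ).mono hsub).intervalIntegrable
    have := intervalIntegral.integral_eq_sub_of_hasDerivAt hderiv hint
    rw [hU0] at this
    linear_combination -this
  -- the main induction
  have key : ∀ N : ℕ, ∀ s ∈ Set.Icc t t', ∀ β : V,
      ‖U s β α‖ ≤
        (∑ k ∈ Finset.range N,
            h ^ k * (s - t) ^ k / (Nat.factorial k : ℝ) * ((A ^ k) β α : ℝ))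
          + M * ((h * c) ^ N * (s - t) ^ N / (Nat.factorial N : ℝ)) := by
    intro N
    induction N with
    | zero =>
      intro s hs β
      simpa using hM s hs β α
    | succ N ih =>
      intro s hs β
      have hst : t ≤ s := hs.1
      have hxs : 0 ≤ s - t := by linarith
      rw [hUeq s hs β α]
      refine le_trans (norm_add_le _ _) ?_
      -- the dominating function
      set g : ℝ → ℝ := fun r =>
        (∑ k ∈ Finset.range N,
            h ^ (k+1) * ((A ^ (k+1)) β α : ℝ) / (Nat.factorial k : ℝ) * (r - t) ^ k)
          + (h * c * M * (h * c) ^ N / (Nat.factorial N : ℝ)) * (r - t) ^ N with hg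
      have hgcont : Continuous g := by
        apply Continuous.add
        · exact continuous_finset_sum _ fun k _ =>
            (continuous_const.mul ((continuous_id.sub continuous_const).pow k))
        · exact continuous_const.mul ((continuous_id.sub continuous_const).pow N)
      -- the pointwise bound
      have hpt : ∀ r ∈ Set.Icc t s, ‖(H r * U r) β α‖ ≤ g r := by
        intro r hr
        have hrI : r ∈ Set.Icc t t' := ⟨hr.1, le_trans hr.2 hs.2⟩
        have hrI' : r ∈ Set.Icc a₀ a₁ := htsub hrI
        have hxr : 0 ≤ r - t := by linarith [hr.1]
        calc ‖(H r * U r) β α‖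
            = ‖∑ δ, H r β δ * U r δ α‖ := by rw [Matrix.mul_apply]
          _ ≤ ∑ δ, ‖H r β δ * U r δ α‖ := norm_sum_le _ _
          _ = ∑ δ, ‖H r β δ‖ * ‖U r δ α‖ := by simp [norm_mul]
          _ ≤ ∑ δ, (h * (A β δ : ℝ)) *
                ((∑ k ∈ Finset.range N,
                    h ^ k * (r - t) ^ k / (Nat.factorial k : ℝ) * ((A ^ k) δ α : ℝ))
                  + M * ((h * c) ^ N * (r - t) ^ N / (Nat.factorial N : ℝ))) := by
              refine Finset.sum_le_sum fun δ _ => ?_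
              exact mul_le_mul (hHle r hrI' β δ) (ih r hrI δ) (norm_nonneg _)
                (mul_nonneg hh0 (Nat.cast_nonneg _))
          _ ≤ g r := by
              rw [hg]
              simp only [mul_add, Finset.sum_add_distrib]
              gcongr ?_ + ?_
              · -- first part: equality
                apply le_of_eq
                simp only [Finset.mul_sum]
                rw [Finset.sum_comm]
                refine Finset.sum_congr rfl fun k _ => ?_
                rw [pow_succ' A, Matrix.mul_apply]
                push_cast
                simp only [Finset.mul_sum, Finset.sum_div, Finset.sum_mul]
                exact Finset.sum_congr rfl fun δ _ => by ring
              · -- second part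
                calc ∑ δ, h * (A β δ : ℝ) *
                        (M * ((h * c) ^ N * (r - t) ^ N / (Nat.factorial N : ℝ)))
                    ≤ ∑ δ : V, h * 1 *
                        (M * ((h * c) ^ N * (r - t) ^ N / (Nat.factorial N : ℝ))) := by
                      refine Finset.sum_le_sum fun δ _ => ?_
                      have : (0:ℝ) ≤ M * ((h * c) ^ N * (r - t) ^ N / (Nat.factorial N : ℝ)) :=
                        mul_nonneg hM0 (div_nonneg
                          (mul_nonneg (pow_nonneg (mul_nonneg hh0 hc0) _) (pow_nonneg hxr _))
                          (Nat.cast_nonneg _))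
                      exact mul_le_mul_of_nonneg_right
                        (mul_le_mul_of_nonneg_left (hA_le β δ) hh0) this
                  _ = h * c * M * (h * c) ^ N / (Nat.factorial N : ℝ) * (r - t) ^ N := by
                      rw [Finset.sum_const]
                      simp [hcdef]
                      ring
      -- integrability pieces
      have hintg : IntervalIntegrable g volume t s := hgcont.intervalIntegrable _ _
      have hnorm : ‖∫ r in t..s, (H r * U r) β α‖ ≤ |∫ r in t..s, g r| := by
        refine le_trans (intervalIntegral.norm_integral_le_of_norm_le hst ?_ hintg) (le_abs_self _)
        refine Filter.Eventually.of_forall ?_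
        intro r hr
        exact hpt r ⟨le_of_lt hr.1, hr.2⟩
      -- computing the integral of g
      have hpow : ∀ k : ℕ, (∫ r in t..s, (r - t) ^ k) = (s - t) ^ (k+1) / ((k:ℝ) + 1) := by
        intro k
        rw [intervalIntegral.integral_comp_sub_right (fun u => u ^ k) t]
        simp [integral_pow]
      have hgint : (∫ r in t..s, g r)
          = (∑ k ∈ Finset.range N,
              h ^ (k+1) * ((A ^ (k+1)) β α : ℝ) / (Nat.factorial k : ℝ)
                * ((s - t) ^ (k+1) / ((k:ℝ) + 1)))
            + (h * c * M * (h * c) ^ N / (Nat.factorial N : ℝ))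
                * ((s - t) ^ (N+1) / ((N:ℝ) + 1)) := by
        have hcint : ∀ (C : ℝ) (k : ℕ),
            IntervalIntegrable (fun r => C * (r - t) ^ k) volume t s := fun C k =>
          (continuous_const.mul ((continuous_sub_right t).pow k)).intervalIntegrable _ _
        have hsum : IntervalIntegrable (fun r =>
            ∑ k ∈ Finset.range N,
              h ^ (k+1) * ((A ^ (k+1)) β α : ℝ) / (Nat.factorial k : ℝ) * (r - t) ^ k)
            volume t s := by
          have h' := IntervalIntegrable.sum (μ := volume) (a := t) (b := s)
            (Finset.range N)
            (f := fun k r => h ^ (k+1) * ((A ^ (k+1)) β α : ℝ) / (Nat.factorial k : ℝ)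
              * (r - t) ^ k) (fun k _ => hcint _ k)
          rwa [Finset.sum_fn] at h'
        show (∫ r in t..s,
            ((∑ k ∈ Finset.range N,
              h ^ (k+1) * ((A ^ (k+1)) β α : ℝ) / (Nat.factorial k : ℝ) * (r - t) ^ k)
              + (h * c * M * (h * c) ^ N / (Nat.factorial N : ℝ)) * (r - t) ^ N)) = _
        rw [intervalIntegral.integral_add hsum (hcint _ N),
            intervalIntegral.integral_finset_sum (fun k _ => hcint _ k)]
        rw [intervalIntegral.integral_const_mul, hpow N]
        refine congrArg (· + _) (Finset.sum_congr rfl fun k _ => ?_)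
        rw [intervalIntegral.integral_const_mul, hpow k]
      -- value of the integral is nonnegative
      have hgnn : 0 ≤ ∫ r in t..s, g r := by
        rw [hgint]
        have h1 : ∀ k ∈ Finset.range N, (0:ℝ) ≤
            h ^ (k+1) * ((A ^ (k+1)) β α : ℝ) / (Nat.factorial k : ℝ)
              * ((s - t) ^ (k+1) / ((k:ℝ) + 1)) := by
          intro k _
          positivity
        have h2 : (0:ℝ) ≤ (h * c * M * (h * c) ^ N / (Nat.factorial N : ℝ))
            * ((s - t) ^ (N+1) / ((N:ℝ) + 1)) := by positivity
        exact add_nonneg (Finset.sum_nonneg h1) h2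
      -- the diagonal term
      have h1term : ‖(1 : Matrix V V ℂ) β α‖
          = h ^ 0 * (s - t) ^ 0 / (Nat.factorial 0 : ℝ) * ((A ^ 0) β α : ℝ) := by
        by_cases hβ : β = α <;> simp [Matrix.one_apply, hβ]
      -- put it together
      rw [h1term]
      calc h ^ 0 * (s - t) ^ 0 / (Nat.factorial 0 : ℝ) * ((A ^ 0) β α : ℝ)
            + ‖∫ r in t..s, (H r * U r) β α‖
          ≤ h ^ 0 * (s - t) ^ 0 / (Nat.factorial 0 : ℝ) * ((A ^ 0) β α : ℝ)
            + |∫ r in t..s, g r| := by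
            exact add_le_add_right hnorm _
        _ = h ^ 0 * (s - t) ^ 0 / (Nat.factorial 0 : ℝ) * ((A ^ 0) β α : ℝ)
            + ∫ r in t..s, g r := by rw [abs_of_nonneg hgnn]
        _ = (∑ k ∈ Finset.range (N+1),
              h ^ k * (s - t) ^ k / (Nat.factorial k : ℝ) * ((A ^ k) β α : ℝ))
            + M * ((h * c) ^ (N+1) * (s - t) ^ (N+1) / (Nat.factorial (N+1) : ℝ)) := by
            rw [hgint, Finset.sum_range_succ']
            have hk : ∀ k ∈ Finset.range N,
                h ^ (k+1) * ((A ^ (k+1)) β α : ℝ) / (Nat.factorial k : ℝ)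
                  * ((s - t) ^ (k+1) / ((k:ℝ) + 1))
                = h ^ (k+1) * (s - t) ^ (k+1) / (Nat.factorial (k+1) : ℝ)
                  * ((A ^ (k+1)) β α : ℝ) := by
              intro k _
              rw [Nat.factorial_succ]
              push_cast
              have hkf : ((Nat.factorial k : ℝ)) ≠ 0 := by positivity
              field_simp
            rw [Finset.sum_congr rfl hk]
            have herr : (h * c * M * (h * c) ^ N / (Nat.factorial N : ℝ))
                * ((s - t) ^ (N+1) / ((N:ℝ) + 1))
                = M * ((h * c) ^ (N+1) * (s - t) ^ (N+1) / (Nat.factorial (N+1) : ℝ)) := by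
              rw [Nat.factorial_succ]
              push_cast
              have hNf : ((Nat.factorial N : ℝ)) ≠ 0 := by positivity
              field_simp
              ring
            rw [herr]
            ring
  -- taking the limit
  set f : ℕ → ℝ := fun k =>
    h ^ k * (t' - t) ^ k / (Nat.factorial k : ℝ) * ((A ^ k) ω α : ℝ) with hf
  have hx0 : 0 ≤ t' - t := by linarith
  have hfs : Summable f := by
    apply Summable.of_nonneg_of_le (fun k => by positivity)
      (fun k => ?_) (Real.summable_pow_div_factorial (h * c * (t' - t)))
    rw [hf]
    calc h ^ k * (t' - t) ^ k / (Nat.factorial k : ℝ) * ((A ^ k) ω α : ℝ)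
        ≤ h ^ k * (t' - t) ^ k / (Nat.factorial k : ℝ) * c ^ k := by
          refine mul_le_mul_of_nonneg_left (hAk k ω α) (by positivity)
      _ = (h * c * (t' - t)) ^ k / (Nat.factorial k : ℝ) := by
          rw [mul_pow, mul_pow]; ring
  have hlim1 : Filter.Tendsto (fun N => ∑ k ∈ Finset.range N, f k)
      Filter.atTop (nhds (∑' k, f k)) := hfs.hasSum.tendsto_sum_nat
  have hlim2 : Filter.Tendsto
      (fun N : ℕ => M * ((h * c) ^ N * (t' - t) ^ N / (Nat.factorial N : ℝ)))
      Filter.atTop (nhds (M * 0)) := by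
    apply Filter.Tendsto.const_mul
    have : (fun N : ℕ => (h * c) ^ N * (t' - t) ^ N / (Nat.factorial N : ℝ))
        = fun N : ℕ => (h * c * (t' - t)) ^ N / (Nat.factorial N : ℝ) := by
      funext N; rw [mul_pow (h * c) (t' - t)]
    rw [this]
    exact FloorSemiring.tendsto_pow_div_factorial_atTop (h * c * (t' - t))
  have hfinal : ‖U t' ω α‖ ≤ ∑' k, f k := by
    have := hlim1.add hlim2
    rw [mul_zero, add_zero] at this
    exact ge_of_tendsto' this (fun N => key N t' ⟨htt, le_rfl⟩ ω)
  refine le_trans hfinal (le_of_eq ?_)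
  symm
  have hsupp : Function.support f ⊆ {k : ℕ | sInf {j : ℕ | (A ^ j) ω α ≠ 0} ≤ k} := by
    intro k hk
    have hAne : (A ^ k) ω α ≠ 0 := by
      intro hz
      apply hk
      rw [hf]
      simp [hz]
    exact Nat.sInf_le hAne
  exact tsum_subtype_eq_of_support_subset hsupp
end

section
/- Super-exponential decay: under the sparse setting with maximum degree Δ of G finite, the entries of the time-ordered exponential satisfy |U(t',t)_{ωα}| ≤ e^{Δh(t'-t)} (Δh(t'-t))^d / d! for t ≤ t', where d = d(α,ω) is the graph distance. -/
open MeasureTheory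

attribute [local instance] Matrix.linftyOpNormedRing Matrix.linftyOpNormedAlgebra

lemma entry_norm_le_aux {V : Type*} [Fintype V] [DecidableEq V] (M : Matrix V V ℂ) (i j : V) :
    ‖M i j‖ ≤ ‖M‖ := by
  rw [Matrix.linfty_opNorm_def]
  have h1 : ‖M i j‖₊ ≤ ∑ k, ‖M i k‖₊ :=
    Finset.single_le_sum (f := fun k => ‖M i k‖₊) (fun k _ => zero_le) (Finset.mem_univ j)
  have h2 : (∑ k, ‖M i k‖₊) ≤ (Finset.univ : Finset V).sup fun i => ∑ k, ‖M i k‖₊ :=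
    Finset.le_sup (f := fun i => ∑ k, ‖M i k‖₊) (Finset.mem_univ i)
  exact_mod_cast h1.trans h2

noncomputable def entryCLM_aux {V : Type*} [Fintype V] [DecidableEq V] (i j : V) :
    Matrix V V ℂ →L[ℂ] ℂ :=
  LinearMap.mkContinuous
    { toFun := fun M => M i j
      map_add' := fun _ _ => rfl
      map_smul' := fun _ _ => rfl } 1
    (fun M => by rw [one_mul]; exact entry_norm_le_aux M i j)

lemma entry_hasDerivAt_aux {V : Type*} [Fintype V] [DecidableEq V]
    (U : ℝ → Matrix V V ℂ) (M : Matrix V V ℂ) (s : ℝ)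
    (hU : HasDerivAt U M s) (i j : V) : HasDerivAt (fun r => U r i j) (M i j) s := by
  have := (((entryCLM_aux (V := V) i j).restrictScalars ℝ).hasFDerivAt (x := U s)).comp_hasDerivAt
    s hU
  exact this

lemma entry_continuousOn_aux {V : Type*} [Fintype V] [DecidableEq V]
    (F : ℝ → Matrix V V ℂ) {s : Set ℝ} (hF : ContinuousOn F s) (i j : V) :
    ContinuousOn (fun r => F r i j) s :=
  ((entryCLM_aux (V := V) i j).continuous.comp_continuousOn hF)

lemma factorial_calc_aux (K e x : ℝ) (d : ℕ) :
    (K ^ (d + 1) * e / (Nat.factorial d : ℝ)) * (x ^ (d + 1) / ((d : ℝ) + 1))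
      = e * (K * x) ^ (d + 1) / (Nat.factorial (d + 1) : ℝ) := by
  have h1 : (Nat.factorial d : ℝ) ≠ 0 := by positivity
  have h2 : ((d : ℝ) + 1) ≠ 0 := by positivity
  rw [mul_pow, Nat.factorial_succ]
  push_cast
  field_simp

/-- super-exponential decay of the entries of the time-ordered
exponential of a sparse matrix whose sparsity graph has maximum degree `Δ`:
`|U(t',t)_{ωα}| ≤ e^{Δh(t'-t)} (Δh(t'-t))^d / d!` where `d = d(α,ω)`. -/
theorem timeOrderedExp_superexponential_decay {V : Type*} [Fintype V] [DecidableEq V]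
    (a₀ a₁ h : ℝ) (Δ : ℕ)
    (H : ℝ → Matrix V V ℂ) (hH : ContinuousOn H (Set.Icc a₀ a₁))
    (A : Matrix V V ℕ)
    (hA0 : ∀ β α, (∀ s ∈ Set.Icc a₀ a₁, H s β α = 0) → A β α = 0)
    (hA1 : ∀ β α, (∃ s ∈ Set.Icc a₀ a₁, H s β α ≠ 0) → A β α = 1)
    (hΔout : ∀ α, ∑ β, A β α ≤ Δ)
    (hΔin : ∀ β, ∑ α, A β α ≤ Δ)
    (hb : ∀ s ∈ Set.Icc a₀ a₁, ∀ β α, ‖H s β α‖ ≤ h)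
    (hh : 0 ≤ h)
    (t t' : ℝ) (ht : t ∈ Set.Icc a₀ a₁) (ht' : t' ∈ Set.Icc a₀ a₁) (htt : t ≤ t')
    (U : ℝ → Matrix V V ℂ) (hU0 : U t = 1)
    (hU : ∀ s ∈ Set.Icc a₀ a₁, HasDerivAt U (H s * U s) s)
    (α ω : V) :
    ‖U t' ω α‖
      ≤ Real.exp ((Δ : ℝ) * h * (t' - t))
          * ((Δ : ℝ) * h * (t' - t)) ^ sInf {j : ℕ | (A ^ j) ω α ≠ 0}
          / (Nat.factorial (sInf {j : ℕ | (A ^ j) ω α ≠ 0}) : ℝ) := by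
  set K : ℝ := (Δ : ℝ) * h with hKdef
  have hK : 0 ≤ K := by positivity
  have hsub : Set.Icc t t' ⊆ Set.Icc a₀ a₁ := Set.Icc_subset_Icc ht.1 ht'.2
  -- A entry zero means H entry vanishes
  have hAzero : ∀ β α', A β α' = 0 → ∀ s ∈ Set.Icc a₀ a₁, H s β α' = 0 := by
    intro β α' hA s hs
    by_contra hne
    have := hA1 β α' ⟨s, hs, hne⟩
    omega
  -- entrywise bound on H
  have hentry : ∀ s ∈ Set.Icc a₀ a₁, ∀ β α', ‖H s β α'‖ ≤ (A β α' : ℝ) * h := by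
    intro s hs β α'
    rcases Nat.eq_zero_or_pos (A β α') with h0 | h1
    · rw [hAzero β α' h0 s hs]
      simp [h0]
    · have h1' : (1 : ℝ) ≤ (A β α' : ℝ) := by exact_mod_cast h1
      calc ‖H s β α'‖ ≤ h := by exact hb s hs β α'
        _ = 1 * h := (one_mul h).symm
        _ ≤ (A β α' : ℝ) * h := by gcongr
  -- norm bound on H
  have hHnorm : ∀ s ∈ Set.Icc a₀ a₁, ‖H s‖ ≤ K := by
    intro s hs
    have hrow : ∀ β, (∑ α', ‖H s β α'‖₊ : NNReal) ≤ ⟨K, hK⟩ := by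
      intro β
      refine NNReal.coe_le_coe.mp ?_
      push_cast
      calc ∑ α', ‖H s β α'‖ ≤ ∑ α', (A β α' : ℝ) * h :=
            Finset.sum_le_sum (fun α' _ => hentry s hs β α')
        _ = (∑ α', (A β α' : ℝ)) * h := by rw [Finset.sum_mul]
        _ ≤ (Δ : ℝ) * h := by
            gcongr
            exact_mod_cast hΔin β
    have hsup : (Finset.univ.sup fun β => ∑ α', ‖H s β α'‖₊) ≤ (⟨K, hK⟩ : NNReal) :=
      Finset.sup_le fun β _ => hrow β
    rw [Matrix.linfty_opNorm_def]
    exact_mod_cast hsup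
  have hUcont : ContinuousOn U (Set.Icc a₀ a₁) :=
    fun s hs => (hU s hs).continuousAt.continuousWithinAt
  -- Gronwall
  have hGron : ∀ s ∈ Set.Icc t t', ‖U s‖ ≤ Real.exp (K * (s - t)) := by
    have := norm_le_gronwallBound_of_norm_deriv_right_le (f := U)
      (f' := fun s => H s * U s) (a := t) (b := t') (δ := 1) (K := K) (ε := 0)
      (hUcont.mono hsub)
      (fun x hx => (hU x (hsub (Set.Ico_subset_Icc_self hx))).hasDerivWithinAt)
      (by
        rw [hU0, ← Matrix.diagonal_one, Matrix.linfty_opNorm_diagonal]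
        refine (pi_norm_le_iff_of_nonneg zero_le_one).2 fun i => ?_
        simp)
      (fun x hx => by
        rw [add_zero]
        calc ‖H x * U x‖ ≤ ‖H x‖ * ‖U x‖ := norm_mul_le _ _
          _ ≤ K * ‖U x‖ := by
              gcongr
              exact hHnorm x (hsub (Set.Ico_subset_Icc_self hx)))
    intro s hs
    have := this s hs
    rwa [gronwallBound_ε0, one_mul] at this
  -- main claim by induction on distance
  have claim : ∀ d : ℕ, ∀ α' ω' : V, (∀ j, j < d → (A ^ j) ω' α' = 0) →
      ∀ s ∈ Set.Icc t t',
        ‖U s ω' α'‖ ≤ Real.exp (K * (s - t)) * (K * (s - t)) ^ d / (Nat.factorial d : ℝ) := by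
    intro d
    induction d with
    | zero =>
      intro α' ω' _ s hs
      simpa using (entry_norm_le_aux (U s) ω' α').trans (hGron s hs)
    | succ d ihd =>
      intro α' ω' hzero s hs
      have hts : t ≤ s := hs.1
      have hωα : ω' ≠ α' := by
        have h0 := hzero 0 (Nat.succ_pos d)
        rw [pow_zero] at h0
        intro he
        subst he
        simp [Matrix.one_apply] at h0
      have hUt0 : U t ω' α' = 0 := by
        rw [hU0]
        simp [Matrix.one_apply, hωα]
      have huIccsub : Set.uIcc t s ⊆ Set.Icc a₀ a₁ := by
        rw [Set.uIcc_of_le hts]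
        exact (Set.Icc_subset_Icc le_rfl hs.2).trans hsub
      -- the integrand is continuous
      have hcont : ContinuousOn (fun r => (H r * U r) ω' α') (Set.Icc a₀ a₁) := by
        have : (fun r => (H r * U r) ω' α') = fun r => ∑ β, H r ω' β * U r β α' := by
          funext r
          exact Matrix.mul_apply
        rw [this]
        exact continuousOn_finset_sum _ fun β _ =>
          (entry_continuousOn_aux H hH ω' β).mul (entry_continuousOn_aux U hUcont β α')
      have hint : IntervalIntegrable (fun r => (H r * U r) ω' α') volume t s :=
        (hcont.mono huIccsub).intervalIntegrable
      have hieq : ∫ r in t..s, (H r * U r) ω' α' = U s ω' α' - U t ω' α' :=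
        intervalIntegral.integral_eq_sub_of_hasDerivAt
          (fun r hr => entry_hasDerivAt_aux U _ r (hU r (huIccsub hr)) ω' α') hint
      set C : ℝ := K ^ (d + 1) * Real.exp (K * (s - t)) / (Nat.factorial d : ℝ) with hCdef
      have hC : 0 ≤ C := by positivity
      -- pointwise bound
      have hbd : ∀ r ∈ Set.uIoc t s, ‖(H r * U r) ω' α'‖ ≤ C * (r - t) ^ d := by
        intro r hr
        rw [Set.uIoc_of_le hts] at hr
        have hrIcc : r ∈ Set.Icc t t' := ⟨le_of_lt hr.1, hr.2.trans hs.2⟩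
        have hrA : r ∈ Set.Icc a₀ a₁ := hsub hrIcc
        have hrt : 0 ≤ r - t := by linarith [hr.1]
        rw [Matrix.mul_apply]
        calc ‖∑ β, H r ω' β * U r β α'‖ ≤ ∑ β, ‖H r ω' β * U r β α'‖ :=
              norm_sum_le _ _
          _ ≤ ∑ β, ((A ω' β : ℝ) * h) *
                (Real.exp (K * (r - t)) * (K * (r - t)) ^ d / (Nat.factorial d : ℝ)) := by
              refine Finset.sum_le_sum fun β _ => ?_
              rcases Nat.eq_zero_or_pos (A ω' β) with h0 | h1
              · rw [hAzero ω' β h0 r hrA]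
                simp only [zero_mul, norm_zero]
                positivity
              · have hjz : ∀ j, j < d → (A ^ j) β α' = 0 := by
                  intro j hj
                  by_contra hne
                  have hz := hzero (j + 1) (by omega)
                  rw [pow_succ', Matrix.mul_apply] at hz
                  have := (Finset.sum_eq_zero_iff.mp hz) β (Finset.mem_univ β)
                  rcases Nat.mul_eq_zero.mp this with hc | hc
                  · omega
                  · exact hne hc
                have hUb := ihd α' β hjz r hrIcc
                rw [norm_mul]
                have hHb := hentry r hrA ω' β
                exact mul_le_mul hHb hUb (norm_nonneg _) (by positivity)
          _ = (∑ β, (A ω' β : ℝ)) * h *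
                (Real.exp (K * (r - t)) * (K * (r - t)) ^ d / (Nat.factorial d : ℝ)) := by
              rw [← Finset.sum_mul, ← Finset.sum_mul]
          _ ≤ ((Δ : ℝ)) * h *
                (Real.exp (K * (r - t)) * (K * (r - t)) ^ d / (Nat.factorial d : ℝ)) := by
              gcongr
              exact_mod_cast hΔin ω'
          _ ≤ ((Δ : ℝ)) * h *
                (Real.exp (K * (s - t)) * (K * (r - t)) ^ d / (Nat.factorial d : ℝ)) := by
              have hX : (0:ℝ) ≤ (K * (r - t)) ^ d := pow_nonneg (mul_nonneg hK hrt) _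
              have hF : (0:ℝ) < (Nat.factorial d : ℝ) := by positivity
              have her : Real.exp (K * (r - t)) ≤ Real.exp (K * (s - t)) :=
                Real.exp_le_exp.2 (by nlinarith [hr.2])
              have h1 : Real.exp (K * (r - t)) * (K * (r - t)) ^ d
                  ≤ Real.exp (K * (s - t)) * (K * (r - t)) ^ d :=
                mul_le_mul_of_nonneg_right her hX
              exact mul_le_mul_of_nonneg_left ((div_le_div_iff_of_pos_right hF).2 h1) (by positivity)
          _ = C * (r - t) ^ d := by
              rw [hCdef, hKdef]
              rw [mul_pow]
              ring
      have hgint : IntervalIntegrable (fun r => C * (r - t) ^ d) volume t s := by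
        exact (continuous_const.mul ((continuous_id.sub continuous_const).pow d)).intervalIntegrable _ _
      have hnorm := intervalIntegral.norm_integral_le_abs_of_norm_le
        (f := fun r => (H r * U r) ω' α') (g := fun r => C * (r - t) ^ d) (μ := volume)
        (by
          refine (ae_restrict_iff' measurableSet_uIoc).2 (Filter.Eventually.of_forall ?_)
          exact hbd) hgint
      have hInt2 : ∫ r in t..s, C * (r - t) ^ d = C * ((s - t) ^ (d + 1) / (d + 1)) := by
        rw [intervalIntegral.integral_const_mul]
        congr 1
        have := intervalIntegral.integral_comp_sub_right (a := t) (b := s)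
          (fun x => x ^ d) t
        rw [this, sub_self, integral_pow]
        simp
      have hfinal : |∫ r in t..s, C * (r - t) ^ d|
          = Real.exp (K * (s - t)) * (K * (s - t)) ^ (d + 1) / (Nat.factorial (d + 1) : ℝ) := by
        have hst : (0:ℝ) ≤ s - t := by linarith
        rw [hInt2, abs_of_nonneg (mul_nonneg hC (div_nonneg (pow_nonneg hst _) (by positivity))),
          hCdef]
        exact factorial_calc_aux K (Real.exp (K * (s - t))) (s - t) d
      calc ‖U s ω' α'‖ = ‖∫ r in t..s, (H r * U r) ω' α'‖ := by
            rw [hieq, hUt0, sub_zero]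
        _ ≤ |∫ r in t..s, C * (r - t) ^ d| := hnorm
        _ = _ := hfinal
  -- conclude
  have hzero : ∀ j, j < sInf {j : ℕ | (A ^ j) ω α ≠ 0} → (A ^ j) ω α = 0 := by
    intro j hj
    have := Nat.notMem_of_lt_sInf hj
    simpa [Set.mem_setOf_eq, not_not] using this
  exact claim _ α ω hzero t' ⟨htt, le_rfl⟩
end
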